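/- Let (X, φ, ⟨⟨·,·⟩⟩) be a Hilbert A-bimodule over a C*-algebra A. For ξ,η ∈ X, the element ⟨⟨ξ,η⟩⟩ is the unique element a of J_X = φ⁻¹(K(X)) ∩ (ker φ)^⊥ satisfying φ(a) = θ_{ξ,η}. In particular, the left inner product of a Hilbert A-bimodule is completely determined by its structure as a C*-correspondence. -/

import Mathlib

open scoped RightActions

/-- The Hilbert C⋆-module class `CStarModule` as it stood in Mathlib (December 2024):
a right `A`-module (action of `Aᵐᵒᵖ`) with an `A`-valued inner product. -/
class OldCStarModule (A E : Type*) [NonUnitalSemiring A] [StarRing A] [Module ℂ A]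
    [AddCommGroup E] [Module ℂ E] [PartialOrder A] [SMul Aᵐᵒᵖ E] [Norm A] [Norm E]
    extends Inner A E where
  inner_add_right {x} {y} {z} : inner x (y + z) = inner x y + inner x z
  inner_self_nonneg {x} : 0 ≤ inner x x
  inner_self {x} : inner x x = 0 ↔ x = 0
  inner_op_smul_right {a : A} {x y : E} : inner x (y <• a) = inner x y * a
  inner_smul_right_complex {z : ℂ} {x} {y} : inner x (z • y) = z • inner x y
  star_inner x y : star (inner x y) = inner y x
  norm_eq_sqrt_norm_inner_self x : ‖x‖ = Real.sqrt ‖inner x x‖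

variable {A X : Type*} [NonUnitalCStarAlgebra A] [PartialOrder A] [StarOrderedRing A]
  [NormedAddCommGroup X] [NormedSpace ℂ X] [SMul Aᵐᵒᵖ X] [OldCStarModule A X] [CompleteSpace X]

/-- `K(X)`: the closed linear span in `B(X)` of the rank-one operators
`θ_{ξ,η} : ζ ↦ ξ • ⟪η, ζ⟫`. -/
def compactOps (A X : Type*) [NonUnitalCStarAlgebra A] [PartialOrder A] [StarOrderedRing A]
    [NormedAddCommGroup X] [NormedSpace ℂ X] [SMul Aᵐᵒᵖ X] [OldCStarModule A X]
    [CompleteSpace X] : Set (X →L[ℂ] X) :=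
  closure (Submodule.span ℂ
    {T : X →L[ℂ] X | ∃ ξ η : X, ∀ ζ : X, T ζ = ξ <• (inner A η ζ : A)} : Set (X →L[ℂ] X))

/-- The ideal `J_X = φ⁻¹(K(X)) ∩ (ker φ)^⊥` of Katsura, as a subset of `A`. -/
def KatsuraIdeal (φ : A →ₙₐ[ℂ] (X →L[ℂ] X)) : Set A :=
  {a : A | φ a ∈ compactOps A X} ∩ {a : A | ∀ b : A, φ b = 0 → a * b = 0}

/-- Let `(X, φ, L)` be a Hilbert `A`-bimodule (here `L ξ η = ⟨⟨ξ, η⟩⟩` is the left inner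
product).  For `ξ, η ∈ X`, the element `⟨⟨ξ, η⟩⟩` is the unique element `a` of
`J_X = φ⁻¹(K(X)) ∩ (ker φ)^⊥` with `φ(a) = θ_{ξ,η}`; in particular the left inner product
is completely determined by the structure of `X` as a C*-correspondence. -/
theorem bimodule_left_inner_unique (φ : A →ₙₐ[ℂ] (X →L[ℂ] X))
    (hmod : ∀ (a : A) (ξ : X) (b : A), φ a (ξ <• b) = (φ a ξ) <• b)
    (L : X → X → A)
    (hadd : ∀ ξ₁ ξ₂ η : X, L (ξ₁ + ξ₂) η = L ξ₁ η + L ξ₂ η)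
    (hsmul : ∀ (c : ℂ) (ξ η : X), L (c • ξ) η = c • L ξ η)
    (h1 : ∀ (a : A) (ξ η : X), L (φ a ξ) η = a * L ξ η)
    (h2 : ∀ ξ η : X, L ξ η = star (L η ξ))
    (h3 : ∀ ξ : X, 0 ≤ L ξ ξ)
    (h4 : ∀ ξ η ζ : X, φ (L ξ η) ζ = ξ <• (inner A η ζ : A)) :
    ∀ ξ η : X,
      L ξ η ∈ KatsuraIdeal φ ∧
      (∀ ζ : X, φ (L ξ η) ζ = ξ <• (inner A η ζ : A)) ∧
      ∀ a ∈ KatsuraIdeal φ, (∀ ζ : X, φ a ζ = ξ <• (inner A η ζ : A)) → a = L ξ η := by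
  intro ξ η
  have hL0 : ∀ ζ : X, L 0 ζ = 0 := fun ζ => by
    have := hsmul 0 0 ζ
    simpa using this
  -- perp property for L ξ η
  have hperpL : ∀ (ξ' η' : X) (b : A), φ b = 0 → L ξ' η' * b = 0 := by
    intro ξ' η' b hb
    have hbb : φ (b * star b) = 0 := by rw [map_mul, hb, zero_mul]
    have hzero : (b * star b) * L η' ξ' = 0 := by
      have := (h1 (b * star b) η' ξ').symm
      rw [hbb] at this
      simpa [hL0] using this
    have hstar : star (L ξ' η' * b) = star b * L η' ξ' := by
      rw [star_mul, ← h2]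
    have key : (L ξ' η' * b) * star (L ξ' η' * b) = 0 := by
      rw [hstar, mul_assoc, ← mul_assoc b, hzero, mul_zero]
    have hnorm : ‖L ξ' η' * b‖ * ‖L ξ' η' * b‖ = 0 := by
      rw [← CStarRing.norm_self_mul_star, key, norm_zero]
    have := mul_self_eq_zero.mp hnorm
    exact norm_eq_zero.mp this
  refine ⟨⟨?_, fun b hb => hperpL ξ η b hb⟩, h4 ξ η, ?_⟩
  · -- φ (L ξ η) ∈ compactOps
    apply subset_closure
    apply Submodule.subset_span
    exact ⟨ξ, η, h4 ξ η⟩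
  · -- uniqueness
    intro a ha hφa
    obtain ⟨-, haperp⟩ := ha
    set d := a - L ξ η with hd
    have hφd : φ d = 0 := by
      have heq : φ a = φ (L ξ η) := ContinuousLinearMap.ext fun ζ => by
        rw [hφa ζ, h4]
      rw [hd, map_sub, heq, sub_self]
    have hb : φ (star d * d) = 0 := by rw [map_mul, hφd, mul_zero]
    have h5 : a * (star d * d) = 0 := haperp _ hb
    have h6 : L ξ η * (star d * d) = 0 := hperpL ξ η _ hb
    have h7 : d * (star d * d) = 0 := by rw [hd, sub_mul, h5, h6, sub_zero]
    have h8 : (star d * d) * (star d * d) = 0 := by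
      rw [mul_assoc, h7, mul_zero]
    have h9 : star d * d = 0 := by
      have hnorm : ‖star d * d‖ * ‖star d * d‖ = 0 := by
        rw [← CStarRing.norm_star_mul_self, star_mul, star_star, ← mul_assoc, mul_assoc, h8,
          norm_zero]
      exact norm_eq_zero.mp (mul_self_eq_zero.mp hnorm)
    have hd0 : d = 0 := by
      have hnorm : ‖d‖ * ‖d‖ = 0 := by rw [← CStarRing.norm_star_mul_self, h9, norm_zero]
      exact norm_eq_zero.mp (mul_self_eq_zero.mp hnorm)
    have := sub_eq_zero.mp (hd ▸ hd0)
    exact this
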